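/- Let V be a complex Hilbert space and M a bounded normal operator on V (M M† = M† M). Set A := (M + M†)/2 and B := (M − M†)/(2i). Let p, q be real polynomials and let S₁, S₂ be bounded operators on V such that p(A) = S₁ (p(A) + q(B)) and q(B) = S₂ (p(A) + q(B)). Then every z in the spectrum σ(M) with p(Re z) + q(Im z) = 0 satisfies p(Re z) = 0 and q(Im z) = 0. -/

import Mathlib

open ContinuousLinearMap

/-- Evaluating the complexification of a real polynomial at a real number. -/
lemma stmt6_aux_eval (p : Polynomial ℝ) (x : ℝ) :
    (p.map (algebraMap ℝ ℂ)).eval (x : ℂ) = ((p.eval x : ℝ) : ℂ) := by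
  rw [Polynomial.eval_map, show ((x : ℂ)) = algebraMap ℝ ℂ x from rfl,
    Polynomial.eval₂_at_apply]
  rfl

/-- Core argument: if `cfc g M = S * cfc f M` and `f z = 0` for `z ∈ σ(M)`, then `g z = 0`. -/
lemma stmt6_aux_key {V : Type*} [NormedAddCommGroup V] [InnerProductSpace ℂ V] [CompleteSpace V]
    (M : V →L[ℂ] V) (hM : IsStarNormal M) (f g : ℂ → ℂ) (hf : Continuous f) (hg : Continuous g)
    (S : V →L[ℂ] V) (hS : cfc g M = S * cfc f M) (z : ℂ) (hz : z ∈ spectrum ℂ M)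
    (hfz : f z = 0) : g z = 0 := by
  have key : ∀ δ : ℝ, 0 < δ → ‖g z‖ ≤ ‖S‖ * δ := by
    intro δ hδ
    -- continuity of f at z
    obtain ⟨ε, hε, hball⟩ := Metric.continuousAt_iff.mp hf.continuousAt δ hδ
    -- bump function
    set e : ℂ → ℂ := fun w => (((1 - dist w z / ε) ⊔ 0 : ℝ) : ℂ) with he
    have hecont : Continuous e := by
      apply Complex.continuous_ofReal.comp
      exact ((continuous_const.sub ((continuous_id.dist continuous_const).div_const ε)).max
        continuous_const)
    have hez : e z = 1 := by simp [he, le_of_lt hε]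
    have hebd : ∀ w, ‖e w‖ ≤ 1 := by
      intro w
      simp only [he, Complex.norm_real, Real.norm_eq_abs]
      rw [abs_of_nonneg (le_max_right _ _)]
      have : 0 ≤ dist w z / ε := div_nonneg dist_nonneg hε.le
      simp only [sup_le_iff]
      constructor <;> linarith
    have hezero : ∀ w, ε ≤ dist w z → e w = 0 := by
      intro w hw
      have : 1 - dist w z / ε ≤ 0 := by
        rw [sub_nonpos]
        rw [le_div_iff₀ hε]
        linarith
      simp [he, max_eq_right this]
    -- the product f * e is small on the spectrum
    have hfe : ∀ w ∈ spectrum ℂ M, ‖f w * e w‖ ≤ δ := by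
      intro w _
      rcases lt_or_ge (dist w z) ε with h | h
      · have h1 : ‖f w‖ ≤ δ := by
          rcases eq_or_ne w z with rfl | hne
          · simp [hfz]; exact hδ.le
          · have := hball h
            rw [hfz, dist_zero_right] at this
            exact this.le
        calc ‖f w * e w‖ = ‖f w‖ * ‖e w‖ := norm_mul _ _
          _ ≤ δ * 1 := mul_le_mul h1 (hebd w) (norm_nonneg _) hδ.le
          _ = δ := mul_one δ
      · simp [hezero w h]; exact hδ.le
    have hnorm_fe : ‖cfc (fun w => f w * e w) M‖ ≤ δ := norm_cfc_le hδ.le hfe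
    -- lower bound: g z = g z * e z is in the spectrum of cfc (g * e) M
    have hmem : g z * e z ∈ spectrum ℂ (cfc (fun w => g w * e w) M) := by
      rw [cfc_map_spectrum (fun w => g w * e w) M (hf := (hg.mul hecont).continuousOn)]
      exact ⟨z, hz, rfl⟩
    have hlow : ‖g z‖ ≤ ‖cfc (fun w => g w * e w) M‖ := by
      have h1 := spectrum.norm_le_norm_mul_of_mem hmem
      have h2 : ‖(1 : V →L[ℂ] V)‖ ≤ 1 := by
        rw [ContinuousLinearMap.one_def]
        exact ContinuousLinearMap.norm_id_le
      rw [hez, mul_one] at h1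
      calc ‖g z‖ ≤ ‖cfc (fun w => g w * e w) M‖ * ‖(1 : V →L[ℂ] V)‖ := h1
        _ ≤ ‖cfc (fun w => g w * e w) M‖ * 1 :=
            mul_le_mul_of_nonneg_left h2 (norm_nonneg _)
        _ = _ := mul_one _
    have hmul : cfc (fun w => g w * e w) M = cfc g M * cfc e M :=
      cfc_mul g e M hg.continuousOn hecont.continuousOn
    have hmul2 : cfc (fun w => f w * e w) M = cfc f M * cfc e M :=
      cfc_mul f e M hf.continuousOn hecont.continuousOn
    calc ‖g z‖ ≤ ‖cfc (fun w => g w * e w) M‖ := hlow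
      _ = ‖S * (cfc (fun w => f w * e w) M)‖ := by rw [hmul, hS, hmul2, mul_assoc]
      _ ≤ ‖S‖ * ‖cfc (fun w => f w * e w) M‖ := norm_mul_le _ _
      _ ≤ ‖S‖ * δ := by
          exact mul_le_mul_of_nonneg_left hnorm_fe (norm_nonneg _)
  -- conclude
  have : ‖g z‖ ≤ 0 := by
    refine le_of_forall_pos_le_add fun ε hε => ?_
    have h2 := key (ε / (‖S‖ + 1)) (by positivity)
    have hle : ‖S‖ / (‖S‖ + 1) ≤ 1 :=
      (div_le_one (by positivity)).mpr (by linarith [norm_nonneg S])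
    rw [zero_add]
    calc ‖g z‖ ≤ ‖S‖ * (ε / (‖S‖ + 1)) := h2
      _ = (‖S‖ / (‖S‖ + 1)) * ε := by ring
      _ ≤ 1 * ε := mul_le_mul_of_nonneg_right hle hε.le
      _ = ε := one_mul ε
  simpa using le_antisymm this (norm_nonneg _)

/-- Let `M` be a bounded normal operator on a complex Hilbert space with real
part `A` and imaginary part `B`, let `p, q` be real polynomials and `S₁, S₂` bounded operators
with `p(A) = S₁ (p(A) + q(B))` and `q(B) = S₂ (p(A) + q(B))`. Then every `z ∈ σ(M)` with
`p(Re z) + q(Im z) = 0` satisfies `p(Re z) = 0` and `q(Im z) = 0`. -/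
theorem stmt_6
    {V : Type*} [NormedAddCommGroup V] [InnerProductSpace ℂ V] [CompleteSpace V]
    (M : V →L[ℂ] V) (hM : M ∘L adjoint M = adjoint M ∘L M)
    (A B : V →L[ℂ] V)
    (hA : A = (2 : ℂ)⁻¹ • (M + adjoint M))
    (hB : B = (2 * Complex.I)⁻¹ • (M - adjoint M))
    (p q : Polynomial ℝ) (S₁ S₂ : V →L[ℂ] V)
    (hS₁ : Polynomial.aeval A (p.map (algebraMap ℝ ℂ)) =
      S₁ ∘L (Polynomial.aeval A (p.map (algebraMap ℝ ℂ)) +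
        Polynomial.aeval B (q.map (algebraMap ℝ ℂ))))
    (hS₂ : Polynomial.aeval B (q.map (algebraMap ℝ ℂ)) =
      S₂ ∘L (Polynomial.aeval A (p.map (algebraMap ℝ ℂ)) +
        Polynomial.aeval B (q.map (algebraMap ℝ ℂ)))) :
    ∀ z ∈ spectrum ℂ M, p.eval z.re + q.eval z.im = 0 →
      p.eval z.re = 0 ∧ q.eval z.im = 0 := by
  have hN : IsStarNormal M := by
    constructor
    show star M * M = M * star M
    rw [star_eq_adjoint]
    exact hM.symm
  -- the real and imaginary parts as continuous functional calculus
  have hAc : A = cfc (fun w : ℂ => (w.re : ℂ)) M := by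
    rw [hA]
    have h1 : (fun w : ℂ => (w.re : ℂ)) = fun w : ℂ => (2 : ℂ)⁻¹ * ((fun x => x + star x) w) := by
      funext w
      show _ = _ * (w + (starRingEnd ℂ) w)
      rw [Complex.add_conj]
      push_cast
      ring
    rw [h1, cfc_const_mul _ (fun x => x + star x) M ((continuous_id'.add continuous_star).continuousOn),
      cfc_add M _ _ continuous_id'.continuousOn continuous_star.continuousOn,
      cfc_id' ℂ M, cfc_star_id M, star_eq_adjoint]
  have hBc : B = cfc (fun w : ℂ => (w.im : ℂ)) M := by
    rw [hB]
    have h1 : (fun w : ℂ => (w.im : ℂ)) =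
        fun w : ℂ => (2 * Complex.I)⁻¹ * ((fun x => x - star x) w) := by
      funext w
      show _ = _ * (w - (starRingEnd ℂ) w)
      rw [Complex.sub_conj]
      field_simp
      push_cast
      ring
    rw [h1, cfc_const_mul _ (fun x => x - star x) M ((continuous_id'.sub continuous_star).continuousOn),
      cfc_sub _ _ M continuous_id'.continuousOn continuous_star.continuousOn,
      cfc_id' ℂ M, cfc_star_id M, star_eq_adjoint]
  -- the polynomial functions
  set gp : ℂ → ℂ := fun w => ((p.eval w.re : ℝ) : ℂ) with hgp
  set gq : ℂ → ℂ := fun w => ((q.eval w.im : ℝ) : ℂ) with hgq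
  have hgpc : Continuous gp :=
    Complex.continuous_ofReal.comp (p.continuous.comp Complex.continuous_re)
  have hgqc : Continuous gq :=
    Complex.continuous_ofReal.comp (q.continuous.comp Complex.continuous_im)
  have hpA : Polynomial.aeval A (p.map (algebraMap ℝ ℂ)) = cfc gp M := by
    rw [hAc,
      ← cfc_map_polynomial (p.map (algebraMap ℝ ℂ)) (fun w : ℂ => (w.re : ℂ)) M
        (hf := (Complex.continuous_ofReal.comp Complex.continuous_re).continuousOn)]
    exact cfc_congr fun w _ => stmt6_aux_eval p w.re
  have hqB : Polynomial.aeval B (q.map (algebraMap ℝ ℂ)) = cfc gq M := by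
    rw [hBc,
      ← cfc_map_polynomial (q.map (algebraMap ℝ ℂ)) (fun w : ℂ => (w.im : ℂ)) M
        (hf := (Complex.continuous_ofReal.comp Complex.continuous_im).continuousOn)]
    exact cfc_congr fun w _ => stmt6_aux_eval q w.im
  have hsum : Polynomial.aeval A (p.map (algebraMap ℝ ℂ)) +
      Polynomial.aeval B (q.map (algebraMap ℝ ℂ)) = cfc (fun w => gp w + gq w) M := by
    rw [hpA, hqB, cfc_add M gp gq hgpc.continuousOn hgqc.continuousOn]
  intro z hz hz0
  have hfz : gp z + gq z = 0 := by
    simp only [hgp, hgq]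
    exact_mod_cast congrArg (Complex.ofReal) hz0
  constructor
  · have h := stmt6_aux_key M hN (fun w => gp w + gq w) gp (hgpc.add hgqc) hgpc S₁
      (by rw [← hpA, ← hsum]; exact hS₁) z hz hfz
    simp only [hgp] at h
    exact_mod_cast h
  · have h := stmt6_aux_key M hN (fun w => gp w + gq w) gq (hgpc.add hgqc) hgqc S₂
      (by rw [← hqB, ← hsum]; exact hS₂) z hz hfz
    simp only [hgq] at h
    exact_mod_cast h
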